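/- Let T ≥ 2h and h ≥ 1 be integers with T_h := T − h, let ρ, β⁰ ∈ ℝ and σ > 0 (with the convention 0^0 = 1). Let u_0, u_1, …, u_T be square-integrable real random variables with E[u_a] = 0 and E[u_a u_b] = σ² · 1{a = b} for all a, b, and let u^y_1, …, u^y_T be square-integrable real random variables with E[u^y_n] = 0 and E[u^y_n u_a] = 0 for all n, a. Let (m_t) be real numbers, x_t := m_t + Σ_{ℓ=0}^{t} ρ^ℓ u_{t−ℓ}, x̄ := T_h^{−1} Σ_{t=1}^{T_h} x_t, x̃_t := x_t − x̄, and e^{(h)}_{t+h} := u^y_{t+h} + β⁰ Σ_{s=0}^{h−1} ρ^s u_{t+h−s}. Then Σ_{t=1}^{T_h} E[ x̃_t e^{(h)}_{t+h} ] = − β⁰ σ² f_{T,h}(ρ), where f_{T,h}(ρ) := Σ_{s=0}^{h−1} Σ_{t=h−s}^{T−h} (1 − t/(T−h)) ρ^{t−h+2s}. -/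

import Mathlib

open MeasureTheory

lemma memlp_two_integrable_mul {Ω : Type*} [MeasurableSpace Ω] {μ : Measure Ω} {f g : Ω → ℝ}
    (hf : MemLp f 2 μ) (hg : MemLp g 2 μ) : Integrable (fun ω => f ω * g ω) μ := by
  have h := L2.integrable_inner (𝕜 := ℝ) (hf.toLp f) (hg.toLp g)
  refine h.congr ?_
  filter_upwards [hf.coeFn_toLp, hg.coeFn_toLp] with ω h1 h2
  simp [h1, h2, RCLike.inner_apply, real_inner_comm]
  ring

lemma reindex_sum (N c : ℕ) (hc : 1 ≤ c) (g : ℕ → ℝ) :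
    ∑ t ∈ Finset.Icc 1 N, ∑ r ∈ Finset.Icc 1 N, (if t + c ≤ r then g (r - t) else 0)
    = ∑ k ∈ Finset.Icc c N, ((N - k : ℕ) : ℝ) * g k := by
  have step1 : ∀ t ∈ Finset.Icc 1 N,
      ∑ r ∈ Finset.Icc 1 N, (if t + c ≤ r then g (r - t) else 0)
        = ∑ k ∈ Finset.Icc c (N - t), g k := by
    intro t ht
    rw [Finset.mem_Icc] at ht
    rw [← Finset.sum_filter]
    have hf : (Finset.Icc 1 N).filter (fun r => t + c ≤ r) = Finset.Icc (t + c) N := by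
      ext r; simp only [Finset.mem_filter, Finset.mem_Icc]; omega
    rw [hf]
    have hmap : Finset.Icc (t + c) N = Finset.map (addLeftEmbedding t) (Finset.Icc c (N - t)) := by
      rw [Finset.map_add_left_Icc]
      congr 1
      omega
    rw [hmap, Finset.sum_map]
    refine Finset.sum_congr rfl fun k _ => ?_
    simp [addLeftEmbedding_apply]
  rw [Finset.sum_congr rfl step1]
  have step2 : ∀ t ∈ Finset.Icc 1 N,
      ∑ k ∈ Finset.Icc c (N - t), g k
        = ∑ k ∈ Finset.Icc 1 N, (if c ≤ k ∧ k + t ≤ N then g k else 0) := by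
    intro t ht
    rw [Finset.mem_Icc] at ht
    rw [← Finset.sum_filter]
    congr 1
    ext k; simp only [Finset.mem_filter, Finset.mem_Icc]; omega
  rw [Finset.sum_congr rfl step2, Finset.sum_comm]
  have step3 : ∀ k ∈ Finset.Icc 1 N,
      ∑ t ∈ Finset.Icc 1 N, (if c ≤ k ∧ k + t ≤ N then g k else 0)
        = if c ≤ k then ((N - k : ℕ) : ℝ) * g k else 0 := by
    intro k hk
    rw [Finset.mem_Icc] at hk
    by_cases hck : c ≤ k
    · simp only [hck, true_and, if_true]
      rw [← Finset.sum_filter]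
      have hf : (Finset.Icc 1 N).filter (fun t => k + t ≤ N) = Finset.Icc 1 (N - k) := by
        ext t; simp only [Finset.mem_filter, Finset.mem_Icc]; omega
      rw [hf, Finset.sum_const, Nat.card_Icc, nsmul_eq_mul]
      norm_num
    · simp [hck]
  rw [Finset.sum_congr rfl step3, ← Finset.sum_filter]
  congr 1
  ext k; simp only [Finset.mem_filter, Finset.mem_Icc]; omega

/-- The exact first moment of the score of the fixed-effect estimator in the
prototype panel local projection: `Σ_{t=1}^{T_h} E[x̃_t e^{(h)}_{t+h}] = −β⁰ σ² f_{T,h}(ρ)`,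
where `f_{T,h}(ρ) = Σ_{s=0}^{h−1} Σ_{t=h−s}^{T−h} (1 − t/(T−h)) ρ^{t−h+2s}`. -/
theorem demeaned_score_first_moment
    {Ω : Type*} [m0 : MeasurableSpace Ω] (μ : Measure Ω) [IsProbabilityMeasure μ]
    (T h : ℕ) (hh : 1 ≤ h) (hT : 2 * h ≤ T)
    (ρ β0 σ : ℝ) (hσ : 0 < σ)
    (u : ℕ → Ω → ℝ)
    (huL2 : ∀ a ∈ Finset.range (T + 1), MemLp (u a) 2 μ)
    (humean : ∀ a ∈ Finset.range (T + 1), ∫ ω, u a ω ∂μ = 0)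
    (hucov : ∀ a ∈ Finset.range (T + 1), ∀ b ∈ Finset.range (T + 1),
      ∫ ω, u a ω * u b ω ∂μ = if a = b then σ ^ 2 else 0)
    (uy : ℕ → Ω → ℝ)
    (huyL2 : ∀ n ∈ Finset.Icc 1 T, MemLp (uy n) 2 μ)
    (huymean : ∀ n ∈ Finset.Icc 1 T, ∫ ω, uy n ω ∂μ = 0)
    (huyucov : ∀ n ∈ Finset.Icc 1 T, ∀ a ∈ Finset.range (T + 1),
      ∫ ω, uy n ω * u a ω ∂μ = 0)
    (m : ℕ → ℝ) (x : ℕ → Ω → ℝ)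
    (hx : ∀ t, x t = fun ω => m t + ∑ ℓ ∈ Finset.range (t + 1), ρ ^ ℓ * u (t - ℓ) ω)
    (xbar : Ω → ℝ)
    (hxbar : xbar = fun ω => ((T - h : ℕ) : ℝ)⁻¹ * ∑ t ∈ Finset.Icc 1 (T - h), x t ω)
    (xtil : ℕ → Ω → ℝ) (hxtil : ∀ t, xtil t = fun ω => x t ω - xbar ω)
    (e : ℕ → Ω → ℝ)
    (he : ∀ t, e t = fun ω =>
      uy (t + h) ω + β0 * ∑ s ∈ Finset.range h, ρ ^ s * u (t + h - s) ω) :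
    ∑ t ∈ Finset.Icc 1 (T - h), ∫ ω, xtil t ω * e t ω ∂μ
      = -β0 * σ ^ 2
          * ∑ s ∈ Finset.range h, ∑ t ∈ Finset.Icc (h - s) (T - h),
              (1 - (t : ℝ) / ((T - h : ℕ) : ℝ)) * ρ ^ (t + 2 * s - h) := by
  set N := T - h with hNdef
  have hN1 : 1 ≤ N := by omega
  have hNT : N ≤ T := by omega
  -- basic memberships
  have hthmem : ∀ t, 1 ≤ t → t ≤ N → t + h ∈ Finset.Icc 1 T := by
    intro t h1 h2; rw [Finset.mem_Icc]; omega
  have humem : ∀ t s, t ≤ N → t + h - s ∈ Finset.range (T + 1) := by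
    intro t s ht; rw [Finset.mem_range]; omega
  have humem' : ∀ r ℓ, r ≤ N → r - ℓ ∈ Finset.range (T + 1) := by
    intro r ℓ hr; rw [Finset.mem_range]; omega
  -- L2 and integrability facts
  have heL2 : ∀ t ∈ Finset.Icc 1 N, MemLp (e t) 2 μ := by
    intro t ht; rw [Finset.mem_Icc] at ht
    rw [he]
    refine (huyL2 _ (hthmem t ht.1 ht.2)).add ?_
    refine MemLp.const_mul ?_ β0
    exact memLp_finset_sum _ (fun s _ => (huL2 _ (humem t s ht.2)).const_mul _)
  have hxL2 : ∀ r ∈ Finset.Icc 1 N, MemLp (x r) 2 μ := by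
    intro r hr; rw [Finset.mem_Icc] at hr
    rw [hx]
    exact (memLp_const (m r)).add
      (memLp_finset_sum _ (fun ℓ _ => (huL2 _ (humem' r ℓ hr.2)).const_mul _))
  have hemean : ∀ t ∈ Finset.Icc 1 N, ∫ ω, e t ω ∂μ = 0 := by
    intro t ht; rw [Finset.mem_Icc] at ht
    rw [he]
    have hintuy : Integrable (uy (t + h)) μ :=
      (huyL2 _ (hthmem t ht.1 ht.2)).integrable one_le_two
    have hint2 : Integrable (fun ω => ∑ s ∈ Finset.range h, ρ ^ s * u (t + h - s) ω) μ :=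
      integrable_finset_sum _
        (fun s _ => ((huL2 _ (humem t s ht.2)).integrable one_le_two).const_mul _)
    rw [integral_add hintuy (hint2.const_mul β0), huymean _ (hthmem t ht.1 ht.2),
      integral_const_mul,
      integral_finset_sum _
        (fun s _ => ((huL2 _ (humem t s ht.2)).integrable one_le_two).const_mul _)]
    have hz : ∑ s ∈ Finset.range h, ∫ ω, ρ ^ s * u (t + h - s) ω ∂μ = 0 :=
      Finset.sum_eq_zero fun s _ => by
        rw [integral_const_mul, humean _ (humem t s ht.2), mul_zero]
    rw [hz]; ring
  -- covariance of u a with e t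
  have hue : ∀ a ∈ Finset.range (T + 1), ∀ t ∈ Finset.Icc 1 N,
      ∫ ω, u a ω * e t ω ∂μ
        = β0 * ∑ s ∈ Finset.range h, ρ ^ s * (if a = t + h - s then σ ^ 2 else 0) := by
    intro a ha t ht
    have ht' := Finset.mem_Icc.mp ht
    have key : ∀ ω, u a ω * e t ω
        = u a ω * uy (t + h) ω
          + ∑ s ∈ Finset.range h, (β0 * ρ ^ s) * (u a ω * u (t + h - s) ω) := by
      intro ω; rw [he]
      simp only [mul_add, Finset.mul_sum]
      congr 1
      exact Finset.sum_congr rfl fun s _ => by ring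
    simp only [key]
    have hint1 : Integrable (fun ω => u a ω * uy (t + h) ω) μ :=
      memlp_two_integrable_mul (huL2 a ha) (huyL2 _ (hthmem t ht'.1 ht'.2))
    have hint2 : ∀ s ∈ Finset.range h,
        Integrable (fun ω => (β0 * ρ ^ s) * (u a ω * u (t + h - s) ω)) μ :=
      fun s _ => (memlp_two_integrable_mul (huL2 a ha) (huL2 _ (humem t s ht'.2))).const_mul _
    rw [integral_add hint1 (integrable_finset_sum _ hint2), integral_finset_sum _ hint2]
    have h0 : ∫ ω, u a ω * uy (t + h) ω ∂μ = 0 := by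
      rw [show (fun ω => u a ω * uy (t + h) ω) = (fun ω => uy (t + h) ω * u a ω)
        from funext fun ω => mul_comm _ _]
      exact huyucov _ (hthmem t ht'.1 ht'.2) a ha
    have hsum : ∑ s ∈ Finset.range h, ∫ ω, (β0 * ρ ^ s) * (u a ω * u (t + h - s) ω) ∂μ
        = ∑ s ∈ Finset.range h, (β0 * ρ ^ s) * (if a = t + h - s then σ ^ 2 else 0) :=
      Finset.sum_congr rfl fun s _ => by
        rw [integral_const_mul, hucov a ha _ (humem t s ht'.2)]
    rw [h0, hsum, zero_add, Finset.mul_sum]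
    exact Finset.sum_congr rfl fun s _ => by ring
  -- covariance of x r with e t
  have hxe : ∀ r ∈ Finset.Icc 1 N, ∀ t ∈ Finset.Icc 1 N,
      ∫ ω, x r ω * e t ω ∂μ
        = β0 * σ ^ 2 * ∑ s ∈ Finset.range h,
            (if t + h ≤ r + s then ρ ^ (r + 2 * s - (t + h)) else 0) := by
    intro r hr t ht
    have hr' := Finset.mem_Icc.mp hr
    have key : ∀ ω, x r ω * e t ω
        = m r * e t ω + ∑ ℓ ∈ Finset.range (r + 1), ρ ^ ℓ * (u (r - ℓ) ω * e t ω) := by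
      intro ω; rw [hx]
      simp only [add_mul, Finset.sum_mul]
      congr 1
      exact Finset.sum_congr rfl fun ℓ _ => by ring
    simp only [key]
    have hint1 : Integrable (fun ω => m r * e t ω) μ :=
      ((heL2 t ht).integrable one_le_two).const_mul _
    have hint2 : ∀ ℓ ∈ Finset.range (r + 1),
        Integrable (fun ω => ρ ^ ℓ * (u (r - ℓ) ω * e t ω)) μ :=
      fun ℓ _ => (memlp_two_integrable_mul (huL2 _ (humem' r ℓ hr'.2)) (heL2 t ht)).const_mul _
    rw [integral_add hint1 (integrable_finset_sum _ hint2), integral_const_mul,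
      hemean t ht, mul_zero, zero_add, integral_finset_sum _ hint2]
    have hsum : ∑ ℓ ∈ Finset.range (r + 1), ∫ ω, ρ ^ ℓ * (u (r - ℓ) ω * e t ω) ∂μ
        = ∑ ℓ ∈ Finset.range (r + 1), ρ ^ ℓ *
            (β0 * ∑ s ∈ Finset.range h, ρ ^ s * (if r - ℓ = t + h - s then σ ^ 2 else 0)) :=
      Finset.sum_congr rfl fun ℓ _ => by
        rw [integral_const_mul, hue _ (humem' r ℓ hr'.2) t ht]
    rw [hsum]
    simp only [Finset.mul_sum]
    rw [Finset.sum_comm]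
    refine Finset.sum_congr rfl fun s hs => ?_
    rw [Finset.mem_range] at hs
    have ht' := Finset.mem_Icc.mp ht
    by_cases hc : t + h ≤ r + s
    · rw [if_pos hc]
      have hstep : ∀ ℓ ∈ Finset.range (r + 1),
          ρ ^ ℓ * (β0 * (ρ ^ s * (if r - ℓ = t + h - s then σ ^ 2 else 0)))
            = if ℓ = r + s - (t + h) then ρ ^ ℓ * (β0 * (ρ ^ s * σ ^ 2)) else 0 := by
        intro ℓ hℓ; rw [Finset.mem_range] at hℓ
        by_cases hℓ0 : ℓ = r + s - (t + h)
        · rw [if_pos (by omega), if_pos hℓ0]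
        · rw [if_neg (by omega), if_neg hℓ0]; ring
      rw [Finset.sum_congr rfl hstep, Finset.sum_ite_eq' (Finset.range (r + 1))]
      rw [if_pos (by rw [Finset.mem_range]; omega)]
      rw [show r + 2 * s - (t + h) = (r + s - (t + h)) + s by omega, pow_add]
      ring
    · rw [if_neg hc, mul_zero]
      refine Finset.sum_eq_zero fun ℓ hℓ => ?_
      rw [Finset.mem_range] at hℓ
      rw [if_neg (by omega)]; ring
  -- integral of demeaned score
  have hxeint : ∀ r ∈ Finset.Icc 1 N, ∀ t ∈ Finset.Icc 1 N,
      Integrable (fun ω => x r ω * e t ω) μ :=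
    fun r hr t ht => memlp_two_integrable_mul (hxL2 r hr) (heL2 t ht)
  have hxtile : ∀ t ∈ Finset.Icc 1 N,
      ∫ ω, xtil t ω * e t ω ∂μ
        = -(((N : ℕ) : ℝ)⁻¹ * ∑ r ∈ Finset.Icc 1 N, ∫ ω, x r ω * e t ω ∂μ) := by
    intro t ht
    have key : ∀ ω, xtil t ω * e t ω
        = x t ω * e t ω
          - ((N : ℕ) : ℝ)⁻¹ * ∑ r ∈ Finset.Icc 1 N, (x r ω * e t ω) := by
      intro ω; rw [hxtil, hxbar]
      simp only [sub_mul]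
      congr 1
      rw [mul_assoc, Finset.sum_mul]
    simp only [key]
    rw [integral_sub (hxeint t ht t ht)
        ((integrable_finset_sum _ (fun r hr => hxeint r hr t ht)).const_mul _),
      integral_const_mul, integral_finset_sum _ (fun r hr => hxeint r hr t ht)]
    have hdiag : ∫ ω, x t ω * e t ω ∂μ = 0 := by
      rw [hxe t ht t ht]
      rw [Finset.sum_eq_zero fun s hs => by
        rw [Finset.mem_range] at hs; exact if_neg (by omega), mul_zero]
    rw [hdiag]; ring
  rw [Finset.sum_congr rfl hxtile]
  -- plug in hxe
  have hplug : ∀ t ∈ Finset.Icc 1 N,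
      ∑ r ∈ Finset.Icc 1 N, ∫ ω, x r ω * e t ω ∂μ
        = β0 * σ ^ 2 * ∑ r ∈ Finset.Icc 1 N, ∑ s ∈ Finset.range h,
            (if t + h ≤ r + s then ρ ^ (r + 2 * s - (t + h)) else 0) := by
    intro t ht
    rw [Finset.mul_sum]
    exact Finset.sum_congr rfl fun r hr => hxe r hr t ht
  -- the inner triple sum, reindexed
  have htriple : ∑ t ∈ Finset.Icc 1 N, ∑ r ∈ Finset.Icc 1 N, ∑ s ∈ Finset.range h,
        (if t + h ≤ r + s then ρ ^ (r + 2 * s - (t + h)) else 0)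
      = ∑ s ∈ Finset.range h, ∑ k ∈ Finset.Icc (h - s) N,
          ((N - k : ℕ) : ℝ) * ρ ^ (k + 2 * s - h) := by
    calc ∑ t ∈ Finset.Icc 1 N, ∑ r ∈ Finset.Icc 1 N, ∑ s ∈ Finset.range h,
          (if t + h ≤ r + s then ρ ^ (r + 2 * s - (t + h)) else 0)
        = ∑ t ∈ Finset.Icc 1 N, ∑ s ∈ Finset.range h, ∑ r ∈ Finset.Icc 1 N,
          (if t + h ≤ r + s then ρ ^ (r + 2 * s - (t + h)) else 0) :=
          Finset.sum_congr rfl fun t _ => Finset.sum_comm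
      _ = ∑ s ∈ Finset.range h, ∑ t ∈ Finset.Icc 1 N, ∑ r ∈ Finset.Icc 1 N,
          (if t + h ≤ r + s then ρ ^ (r + 2 * s - (t + h)) else 0) := Finset.sum_comm
      _ = ∑ s ∈ Finset.range h, ∑ k ∈ Finset.Icc (h - s) N,
          ((N - k : ℕ) : ℝ) * ρ ^ (k + 2 * s - h) := by
          refine Finset.sum_congr rfl fun s hs => ?_
          rw [Finset.mem_range] at hs
          have hconv : ∀ t ∈ Finset.Icc 1 N, ∀ r ∈ Finset.Icc 1 N,
              (if t + h ≤ r + s then ρ ^ (r + 2 * s - (t + h)) else 0)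
                = (if t + (h - s) ≤ r then ρ ^ ((r - t) + 2 * s - h) else 0) := by
            intro t ht r hr
            by_cases hc : t + h ≤ r + s
            · rw [if_pos hc, if_pos (by omega)]
              congr 1
              omega
            · rw [if_neg hc, if_neg (by omega)]
          rw [Finset.sum_congr rfl fun t ht =>
            Finset.sum_congr rfl fun r hr => hconv t ht r hr]
          exact reindex_sum N (h - s) (by omega) (fun k => ρ ^ (k + 2 * s - h))
  -- final algebra
  have hfin : ((N : ℕ) : ℝ)⁻¹ * ∑ s ∈ Finset.range h, ∑ k ∈ Finset.Icc (h - s) N,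
        ((N - k : ℕ) : ℝ) * ρ ^ (k + 2 * s - h)
      = ∑ s ∈ Finset.range h, ∑ k ∈ Finset.Icc (h - s) N,
          (1 - (k : ℝ) / ((N : ℕ) : ℝ)) * ρ ^ (k + 2 * s - h) := by
    rw [Finset.mul_sum]
    refine Finset.sum_congr rfl fun s _ => ?_
    rw [Finset.mul_sum]
    refine Finset.sum_congr rfl fun k hk => ?_
    rw [Finset.mem_Icc] at hk
    rw [Nat.cast_sub hk.2]
    have hN0 : ((N : ℕ) : ℝ) ≠ 0 := Nat.cast_ne_zero.mpr (by omega)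
    field_simp
  calc ∑ t ∈ Finset.Icc 1 N,
        -(((N : ℕ) : ℝ)⁻¹ * ∑ r ∈ Finset.Icc 1 N, ∫ ω, x r ω * e t ω ∂μ)
      = -(((N : ℕ) : ℝ)⁻¹ * (β0 * σ ^ 2 *
          ∑ t ∈ Finset.Icc 1 N, ∑ r ∈ Finset.Icc 1 N, ∑ s ∈ Finset.range h,
            (if t + h ≤ r + s then ρ ^ (r + 2 * s - (t + h)) else 0))) := by
        rw [Finset.mul_sum, Finset.mul_sum, ← Finset.sum_neg_distrib]
        refine Finset.sum_congr rfl fun t ht => ?_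
        rw [hplug t ht]
    _ = -β0 * σ ^ 2 * ∑ s ∈ Finset.range h, ∑ k ∈ Finset.Icc (h - s) N,
          (1 - (k : ℝ) / ((N : ℕ) : ℝ)) * ρ ^ (k + 2 * s - h) := by
        rw [htriple, ← hfin]
        ring
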